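/- In the setting of the parabolic Monge chart with k > 0 and a ≠ 0, the zero set of the Gaussian curvature K near the origin is a regular curve of the form x = −(d/a)y + O(y²); in particular the gradient of K at 0 is the nonzero vector k·(a, d), so the parabolic curve is a regular curve normal to (a,d) and transversal to the direction (1,0). -/

import Mathlib

/-- Partial derivative in the `x` direction. -/
noncomputable def pdx (f : ℝ × ℝ → ℝ) (q : ℝ × ℝ) : ℝ := fderiv ℝ f q (1, 0)

/-- Partial derivative in the `y` direction. -/
noncomputable def pdy (f : ℝ × ℝ → ℝ) (q : ℝ × ℝ) : ℝ := fderiv ℝ f q (0, 1)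

/-- Gaussian curvature of the graph `z = h(x,y)`. -/
noncomputable def gaussK (h : ℝ × ℝ → ℝ) (q : ℝ × ℝ) : ℝ :=
  (pdx (pdx h) q * pdy (pdy h) q - pdx (pdy h) q ^ 2)
    / (1 + pdx h q ^ 2 + pdy h q ^ 2) ^ 2

/-- Monge form at a parabolic point: cubic jet plus a remainder. -/
noncomputable def mongePar3 (k a b c d : ℝ) (Rm : ℝ × ℝ → ℝ) : ℝ × ℝ → ℝ :=
  fun q => k / 2 * q.2 ^ 2 + a / 6 * q.1 ^ 3 + d / 2 * q.1 ^ 2 * q.2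
    + b / 2 * q.1 * q.2 ^ 2 + c / 6 * q.2 ^ 3 + Rm q


/- ### Auxiliary lemmas -/

theorem contDiff_pdx {n : ℕ∞} {f : ℝ × ℝ → ℝ} (hf : ContDiff ℝ (n + 1) f) :
    ContDiff ℝ n (pdx f) :=
  (ContinuousLinearMap.apply ℝ ℝ ((1:ℝ), (0:ℝ))).contDiff.comp (hf.fderiv_right le_rfl)

theorem contDiff_pdy {n : ℕ∞} {f : ℝ × ℝ → ℝ} (hf : ContDiff ℝ (n + 1) f) :
    ContDiff ℝ n (pdy f) :=
  (ContinuousLinearMap.apply ℝ ℝ ((0:ℝ), (1:ℝ))).contDiff.comp (hf.fderiv_right le_rfl)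

theorem pdx_hasDerivAt {f : ℝ × ℝ → ℝ} {q : ℝ × ℝ} (hf : DifferentiableAt ℝ f q) :
    HasDerivAt (fun x => f (x, q.2)) (pdx f q) q.1 := by
  have h1 : HasDerivAt (fun x : ℝ => (x, q.2)) ((1:ℝ), (0:ℝ)) q.1 :=
    (hasDerivAt_id q.1).prodMk (hasDerivAt_const q.1 q.2)
  have := hf.hasFDerivAt.comp_hasDerivAt q.1 (by simpa using h1)
  exact this

theorem pdy_hasDerivAt {f : ℝ × ℝ → ℝ} {q : ℝ × ℝ} (hf : DifferentiableAt ℝ f q) :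
    HasDerivAt (fun y => f (q.1, y)) (pdy f q) q.2 := by
  have h1 : HasDerivAt (fun y : ℝ => (q.1, y)) ((0:ℝ), (1:ℝ)) q.2 :=
    (hasDerivAt_const q.2 q.1).prodMk (hasDerivAt_id q.2)
  have := hf.hasFDerivAt.comp_hasDerivAt q.2 (by simpa using h1)
  exact this

theorem pdx_eq {f : ℝ × ℝ → ℝ} {q : ℝ × ℝ} {A : ℝ} (hf : DifferentiableAt ℝ f q)
    (H : HasDerivAt (fun x => f (x, q.2)) A q.1) : pdx f q = A :=
  (pdx_hasDerivAt hf).unique H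

theorem pdy_eq {f : ℝ × ℝ → ℝ} {q : ℝ × ℝ} {A : ℝ} (hf : DifferentiableAt ℝ f q)
    (H : HasDerivAt (fun y => f (q.1, y)) A q.2) : pdy f q = A :=
  (pdy_hasDerivAt hf).unique H

theorem jet_step {n : ℕ} {f : ℝ × ℝ → ℝ} (hf : ContDiff ℝ ((n:ℕ∞)+1) f)
    (h0 : iteratedFDeriv ℝ (n+1) f 0 = 0) (v : ℝ × ℝ) :
    iteratedFDeriv ℝ n (fun q => fderiv ℝ f q v) 0 = 0 := by
  ext m
  have he : (fun q => fderiv ℝ f q v) = (ContinuousLinearMap.apply ℝ ℝ v) ∘ (fderiv ℝ f) := rfl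
  rw [he, ContinuousLinearMap.iteratedFDeriv_comp_left _ (hf.fderiv_right (le_refl _)).contDiffAt
    (le_refl _)]
  have h2 := iteratedFDeriv_succ_apply_right (𝕜 := ℝ) (f := f) (x := 0) (n := n) (Fin.snoc m v)
  rw [Fin.init_snoc, Fin.snoc_last, h0] at h2
  simp only [ContinuousLinearMap.compContinuousMultilinearMap_coe, Function.comp_apply,
    ContinuousLinearMap.apply_apply]
  rw [← h2]
  simp

theorem jet_fderiv {f : ℝ × ℝ → ℝ} (h0 : iteratedFDeriv ℝ 1 f 0 = 0) (v : ℝ × ℝ) :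
    fderiv ℝ f 0 v = 0 := by
  have := congrFun (congrArg DFunLike.coe h0) (fun _ => v)
  simpa [iteratedFDeriv_one_apply] using this

/-- First-order x-derivative of the Monge form. -/
theorem pdx_monge (k a b c d : ℝ) (Rm : ℝ × ℝ → ℝ) (hR : ContDiff ℝ 4 Rm) :
    pdx (mongePar3 k a b c d Rm)
      = fun q => a/2*q.1^2 + d*q.1*q.2 + b/2*q.2^2 + pdx Rm q := by
  have hm : ContDiff ℝ 4 (mongePar3 k a b c d Rm) := by
    unfold mongePar3; fun_prop
  funext q
  apply pdx_eq ((hm.differentiable (by norm_num)).differentiableAt)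
  have hRm : HasDerivAt (fun x => Rm (x, q.2)) (pdx Rm q) q.1 :=
    pdx_hasDerivAt ((hR.differentiable (by norm_num)).differentiableAt)
  have hp : HasDerivAt (fun x : ℝ => k / 2 * q.2 ^ 2 + a / 6 * x ^ 3 + d / 2 * x ^ 2 * q.2
      + b / 2 * x * q.2 ^ 2 + c / 6 * q.2 ^ 3)
      (a/2*q.1^2 + d*q.1*q.2 + b/2*q.2^2) q.1 := by
    have H := ((((hasDerivAt_const q.1 (k / 2 * q.2 ^ 2)).add
        (HasDerivAt.const_mul (a/6) (hasDerivAt_pow 3 q.1))).add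
        ((HasDerivAt.const_mul (d/2) (hasDerivAt_pow 2 q.1)).mul_const q.2)).add
        ((HasDerivAt.const_mul (b/2) (hasDerivAt_id' (x := q.1))).mul_const (q.2^2))).add
        (hasDerivAt_const q.1 (c / 6 * q.2 ^ 3))
    refine H.congr_deriv ?_
    push_cast; ring
  exact hp.add hRm

/-- First-order y-derivative of the Monge form. -/
theorem pdy_monge (k a b c d : ℝ) (Rm : ℝ × ℝ → ℝ) (hR : ContDiff ℝ 4 Rm) :
    pdy (mongePar3 k a b c d Rm)
      = fun q => k*q.2 + d/2*q.1^2 + b*q.1*q.2 + c/2*q.2^2 + pdy Rm q := by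
  have hm : ContDiff ℝ 4 (mongePar3 k a b c d Rm) := by
    unfold mongePar3; fun_prop
  funext q
  apply pdy_eq ((hm.differentiable (by norm_num)).differentiableAt)
  have hRm : HasDerivAt (fun y => Rm (q.1, y)) (pdy Rm q) q.2 :=
    pdy_hasDerivAt ((hR.differentiable (by norm_num)).differentiableAt)
  have hp : HasDerivAt (fun y : ℝ => k / 2 * y ^ 2 + a / 6 * q.1 ^ 3 + d / 2 * q.1 ^ 2 * y
      + b / 2 * q.1 * y ^ 2 + c / 6 * y ^ 3)
      (k*q.2 + d/2*q.1^2 + b*q.1*q.2 + c/2*q.2^2) q.2 := by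
    have H := ((((HasDerivAt.const_mul (k/2) (hasDerivAt_pow 2 q.2)).add
        (hasDerivAt_const q.2 (a / 6 * q.1 ^ 3))).add
        (HasDerivAt.const_mul (d / 2 * q.1 ^ 2) (hasDerivAt_id' (x := q.2)))).add
        (HasDerivAt.const_mul (b / 2 * q.1) (hasDerivAt_pow 2 q.2))).add
        (HasDerivAt.const_mul (c/6) (hasDerivAt_pow 3 q.2))
    refine H.congr_deriv ?_
    push_cast; ring
  exact hp.add hRm

theorem pdxx_monge (k a b c d : ℝ) (Rm : ℝ × ℝ → ℝ) (hR : ContDiff ℝ 4 Rm) :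
    pdx (pdx (mongePar3 k a b c d Rm))
      = fun q => a*q.1 + d*q.2 + pdx (pdx Rm) q := by
  rw [pdx_monge k a b c d Rm hR]
  have hr1 : Differentiable ℝ (pdx Rm) :=
    (contDiff_pdx (n := 3) (hR.of_le (by norm_num))).differentiable (by norm_num)
  funext q
  apply pdx_eq (by fun_prop)
  have hRm : HasDerivAt (fun x => pdx Rm (x, q.2)) (pdx (pdx Rm) q) q.1 :=
    pdx_hasDerivAt (hr1.differentiableAt)
  have hp : HasDerivAt (fun x : ℝ => a/2*x^2 + d*x*q.2 + b/2*q.2^2)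
      (a*q.1 + d*q.2) q.1 := by
    have H := ((HasDerivAt.const_mul (a/2) (hasDerivAt_pow 2 q.1)).add
        ((HasDerivAt.const_mul d (hasDerivAt_id' (x := q.1))).mul_const q.2)).add
        (hasDerivAt_const q.1 (b/2*q.2^2))
    refine H.congr_deriv ?_
    push_cast; ring
  exact hp.add hRm

theorem pdyx_monge (k a b c d : ℝ) (Rm : ℝ × ℝ → ℝ) (hR : ContDiff ℝ 4 Rm) :
    pdy (pdx (mongePar3 k a b c d Rm))
      = fun q => d*q.1 + b*q.2 + pdy (pdx Rm) q := by
  rw [pdx_monge k a b c d Rm hR]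
  have hr1 : Differentiable ℝ (pdx Rm) :=
    (contDiff_pdx (n := 3) (hR.of_le (by norm_num))).differentiable (by norm_num)
  funext q
  apply pdy_eq (by fun_prop)
  have hRm : HasDerivAt (fun y => pdx Rm (q.1, y)) (pdy (pdx Rm) q) q.2 :=
    pdy_hasDerivAt (hr1.differentiableAt)
  have hp : HasDerivAt (fun y : ℝ => a/2*q.1^2 + d*q.1*y + b/2*y^2)
      (d*q.1 + b*q.2) q.2 := by
    have H := ((hasDerivAt_const q.2 (a/2*q.1^2)).add
        (HasDerivAt.const_mul (d*q.1) (hasDerivAt_id' (x := q.2)))).add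
        (HasDerivAt.const_mul (b/2) (hasDerivAt_pow 2 q.2))
    refine H.congr_deriv ?_
    push_cast; ring
  exact hp.add hRm

theorem pdxy_monge (k a b c d : ℝ) (Rm : ℝ × ℝ → ℝ) (hR : ContDiff ℝ 4 Rm) :
    pdx (pdy (mongePar3 k a b c d Rm))
      = fun q => d*q.1 + b*q.2 + pdx (pdy Rm) q := by
  rw [pdy_monge k a b c d Rm hR]
  have hr2 : Differentiable ℝ (pdy Rm) :=
    (contDiff_pdy (n := 3) (hR.of_le (by norm_num))).differentiable (by norm_num)
  funext q
  apply pdx_eq (by fun_prop)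
  have hRm : HasDerivAt (fun x => pdy Rm (x, q.2)) (pdx (pdy Rm) q) q.1 :=
    pdx_hasDerivAt (hr2.differentiableAt)
  have hp : HasDerivAt (fun x : ℝ => k*q.2 + d/2*x^2 + b*x*q.2 + c/2*q.2^2)
      (d*q.1 + b*q.2) q.1 := by
    have H := (((hasDerivAt_const q.1 (k*q.2)).add
        (HasDerivAt.const_mul (d/2) (hasDerivAt_pow 2 q.1))).add
        ((HasDerivAt.const_mul b (hasDerivAt_id' (x := q.1))).mul_const q.2)).add
        (hasDerivAt_const q.1 (c/2*q.2^2))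
    refine H.congr_deriv ?_
    push_cast; ring
  exact hp.add hRm

theorem pdyy_monge (k a b c d : ℝ) (Rm : ℝ × ℝ → ℝ) (hR : ContDiff ℝ 4 Rm) :
    pdy (pdy (mongePar3 k a b c d Rm))
      = fun q => k + b*q.1 + c*q.2 + pdy (pdy Rm) q := by
  rw [pdy_monge k a b c d Rm hR]
  have hr2 : Differentiable ℝ (pdy Rm) :=
    (contDiff_pdy (n := 3) (hR.of_le (by norm_num))).differentiable (by norm_num)
  funext q
  apply pdy_eq (by fun_prop)
  have hRm : HasDerivAt (fun y => pdy Rm (q.1, y)) (pdy (pdy Rm) q) q.2 :=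
    pdy_hasDerivAt (hr2.differentiableAt)
  have hp : HasDerivAt (fun y : ℝ => k*y + d/2*q.1^2 + b*q.1*y + c/2*y^2)
      (k + b*q.1 + c*q.2) q.2 := by
    have H := (((HasDerivAt.const_mul k (hasDerivAt_id' (x := q.2))).add
        (hasDerivAt_const q.2 (d/2*q.1^2))).add
        (HasDerivAt.const_mul (b*q.1) (hasDerivAt_id' (x := q.2)))).add
        (HasDerivAt.const_mul (c/2) (hasDerivAt_pow 2 q.2))
    refine H.congr_deriv ?_
    push_cast; ring
  exact hp.add hRm

theorem contDiff_pd {n : ℕ∞} {f : ℝ × ℝ → ℝ} (hf : ContDiff ℝ (n + 1) f) (v : ℝ × ℝ) :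
    ContDiff ℝ n (fun q => fderiv ℝ f q v) :=
  (ContinuousLinearMap.apply ℝ ℝ v).contDiff.comp (hf.fderiv_right le_rfl)

theorem gradK_monge (k a b c d : ℝ) (Rm : ℝ × ℝ → ℝ) (hR : ContDiff ℝ 4 Rm)
    (hjet : ∀ i : ℕ, i ≤ 3 → iteratedFDeriv ℝ i Rm 0 = 0) :
    gaussK (mongePar3 k a b c d Rm) ((0:ℝ), (0:ℝ)) = 0 ∧
    pdx (gaussK (mongePar3 k a b c d Rm)) ((0:ℝ), (0:ℝ)) = k * a ∧
    pdy (gaussK (mongePar3 k a b c d Rm)) ((0:ℝ), (0:ℝ)) = k * d := by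
  set h := mongePar3 k a b c d Rm with hh
  have hm : ContDiff ℝ 4 h := by rw [hh]; unfold mongePar3; fun_prop
  -- jet values of the remainder
  have jv1 : ∀ v : ℝ × ℝ, fderiv ℝ Rm 0 v = 0 := fun v => jet_fderiv (hjet 1 (by norm_num)) v
  have jv2 : ∀ v w : ℝ × ℝ, fderiv ℝ (fun q => fderiv ℝ Rm q v) 0 w = 0 := fun v w =>
    jet_fderiv (jet_step (n := 1) (hR.of_le (by norm_num)) (hjet 2 (by norm_num)) v) w
  have jv3 : ∀ v w u : ℝ × ℝ,
      fderiv ℝ (fun q => fderiv ℝ (fun p => fderiv ℝ Rm p v) q w) 0 u = 0 := fun v w u =>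
    jet_fderiv (jet_step (n := 1) ((contDiff_pd (n := 3) (hR.of_le (by norm_num)) v).of_le
      (by norm_num)) (jet_step (n := 2) (hR.of_le (by norm_num)) (hjet 3 (by norm_num)) v) w) u
  -- values of the partials of `h` at the origin
  have v1 : pdx h ((0:ℝ), (0:ℝ)) = 0 := by
    rw [pdx_monge k a b c d Rm hR]
    have : pdx Rm (0 : ℝ × ℝ) = 0 := jv1 (1, 0)
    simp [this, Prod.mk_zero_zero]
  have v2 : pdy h ((0:ℝ), (0:ℝ)) = 0 := by
    rw [pdy_monge k a b c d Rm hR]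
    have : pdy Rm (0 : ℝ × ℝ) = 0 := jv1 (0, 1)
    simp [this, Prod.mk_zero_zero]
  have v11 : pdx (pdx h) ((0:ℝ), (0:ℝ)) = 0 := by
    rw [pdxx_monge k a b c d Rm hR]
    have : pdx (pdx Rm) (0 : ℝ × ℝ) = 0 := jv2 (1, 0) (1, 0)
    simp [this, Prod.mk_zero_zero]
  have v21 : pdy (pdx h) ((0:ℝ), (0:ℝ)) = 0 := by
    rw [pdyx_monge k a b c d Rm hR]
    have : pdy (pdx Rm) (0 : ℝ × ℝ) = 0 := jv2 (1, 0) (0, 1)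
    simp [this, Prod.mk_zero_zero]
  have v12 : pdx (pdy h) ((0:ℝ), (0:ℝ)) = 0 := by
    rw [pdxy_monge k a b c d Rm hR]
    have : pdx (pdy Rm) (0 : ℝ × ℝ) = 0 := jv2 (0, 1) (1, 0)
    simp [this, Prod.mk_zero_zero]
  have v22 : pdy (pdy h) ((0:ℝ), (0:ℝ)) = k := by
    rw [pdyy_monge k a b c d Rm hR]
    have : pdy (pdy Rm) (0 : ℝ × ℝ) = 0 := jv2 (0, 1) (0, 1)
    simp [this, Prod.mk_zero_zero]

  -- restate values at `0`
  have w1 : pdx h (0 : ℝ × ℝ) = 0 := v1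
  have w2 : pdy h (0 : ℝ × ℝ) = 0 := v2
  have w11 : pdx (pdx h) (0 : ℝ × ℝ) = 0 := v11
  have w21 : pdy (pdx h) (0 : ℝ × ℝ) = 0 := v21
  have w12 : pdx (pdy h) (0 : ℝ × ℝ) = 0 := v12
  have w22 : pdy (pdy h) (0 : ℝ × ℝ) = k := v22
  -- smoothness of remainder partials
  have hr1 : Differentiable ℝ (pdx Rm) :=
    (contDiff_pdx (n := 3) (hR.of_le (by norm_num))).differentiable (by norm_num)
  have hr2 : Differentiable ℝ (pdy Rm) :=
    (contDiff_pdy (n := 3) (hR.of_le (by norm_num))).differentiable (by norm_num)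
  have hr11 : Differentiable ℝ (pdx (pdx Rm)) :=
    (contDiff_pdx (n := 2) ((contDiff_pdx (n := 3) (hR.of_le (by norm_num))).of_le
      (by norm_num))).differentiable (by norm_num)
  have hr12 : Differentiable ℝ (pdx (pdy Rm)) :=
    (contDiff_pdx (n := 2) ((contDiff_pdy (n := 3) (hR.of_le (by norm_num))).of_le
      (by norm_num))).differentiable (by norm_num)
  have hr22 : Differentiable ℝ (pdy (pdy Rm)) :=
    (contDiff_pdy (n := 2) ((contDiff_pdy (n := 3) (hR.of_le (by norm_num))).of_le
      (by norm_num))).differentiable (by norm_num)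
  -- third order jet values
  have j11x : pdx (pdx (pdx Rm)) (0 : ℝ × ℝ) = 0 := jv3 (1,0) (1,0) (1,0)
  have j11y : pdy (pdx (pdx Rm)) (0 : ℝ × ℝ) = 0 := jv3 (1,0) (1,0) (0,1)
  have j12x : pdx (pdx (pdy Rm)) (0 : ℝ × ℝ) = 0 := jv3 (0,1) (1,0) (1,0)
  have j12y : pdy (pdx (pdy Rm)) (0 : ℝ × ℝ) = 0 := jv3 (0,1) (1,0) (0,1)
  have j22x : pdx (pdy (pdy Rm)) (0 : ℝ × ℝ) = 0 := jv3 (0,1) (0,1) (1,0)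
  have j22y : pdy (pdy (pdy Rm)) (0 : ℝ × ℝ) = 0 := jv3 (0,1) (0,1) (0,1)
  -- third-order partials of `h` at the origin
  have d11x : pdx (pdx (pdx h)) (0 : ℝ × ℝ) = a := by
    rw [pdxx_monge k a b c d Rm hR]
    refine pdx_eq (by fun_prop) ?_
    have H := ((HasDerivAt.const_mul a (hasDerivAt_id' (x := ((0:ℝ×ℝ)).1))).add
      (hasDerivAt_const ((0:ℝ×ℝ)).1 (d * ((0:ℝ×ℝ)).2))).add
      (pdx_hasDerivAt (q := (0:ℝ×ℝ)) (hr11.differentiableAt))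
    rw [j11x] at H
    refine H.congr_deriv ?_
    ring
  have d11y : pdy (pdx (pdx h)) (0 : ℝ × ℝ) = d := by
    rw [pdxx_monge k a b c d Rm hR]
    refine pdy_eq (by fun_prop) ?_
    have H := ((hasDerivAt_const ((0:ℝ×ℝ)).2 (a * ((0:ℝ×ℝ)).1)).add
      (HasDerivAt.const_mul d (hasDerivAt_id' (x := ((0:ℝ×ℝ)).2)))).add
      (pdy_hasDerivAt (q := (0:ℝ×ℝ)) (hr11.differentiableAt))
    rw [j11y] at H
    refine H.congr_deriv ?_
    ring
  have d12x : pdx (pdx (pdy h)) (0 : ℝ × ℝ) = d := by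
    rw [pdxy_monge k a b c d Rm hR]
    refine pdx_eq (by fun_prop) ?_
    have H := ((HasDerivAt.const_mul d (hasDerivAt_id' (x := ((0:ℝ×ℝ)).1))).add
      (hasDerivAt_const ((0:ℝ×ℝ)).1 (b * ((0:ℝ×ℝ)).2))).add
      (pdx_hasDerivAt (q := (0:ℝ×ℝ)) (hr12.differentiableAt))
    rw [j12x] at H
    refine H.congr_deriv ?_
    ring
  have d12y : pdy (pdx (pdy h)) (0 : ℝ × ℝ) = b := by
    rw [pdxy_monge k a b c d Rm hR]
    refine pdy_eq (by fun_prop) ?_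
    have H := ((hasDerivAt_const ((0:ℝ×ℝ)).2 (d * ((0:ℝ×ℝ)).1)).add
      (HasDerivAt.const_mul b (hasDerivAt_id' (x := ((0:ℝ×ℝ)).2)))).add
      (pdy_hasDerivAt (q := (0:ℝ×ℝ)) (hr12.differentiableAt))
    rw [j12y] at H
    refine H.congr_deriv ?_
    ring
  have d22x : pdx (pdy (pdy h)) (0 : ℝ × ℝ) = b := by
    rw [pdyy_monge k a b c d Rm hR]
    refine pdx_eq (by fun_prop) ?_
    have H := (((hasDerivAt_const ((0:ℝ×ℝ)).1 (k:ℝ)).add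
      (HasDerivAt.const_mul b (hasDerivAt_id' (x := ((0:ℝ×ℝ)).1)))).add
      (hasDerivAt_const ((0:ℝ×ℝ)).1 (c * ((0:ℝ×ℝ)).2))).add
      (pdx_hasDerivAt (q := (0:ℝ×ℝ)) (hr22.differentiableAt))
    rw [j22x] at H
    refine H.congr_deriv ?_
    ring
  have d22y : pdy (pdy (pdy h)) (0 : ℝ × ℝ) = c := by
    rw [pdyy_monge k a b c d Rm hR]
    refine pdy_eq (by fun_prop) ?_
    have H := (((hasDerivAt_const ((0:ℝ×ℝ)).2 (k:ℝ)).add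
      (hasDerivAt_const ((0:ℝ×ℝ)).2 (b * ((0:ℝ×ℝ)).1))).add
      (HasDerivAt.const_mul c (hasDerivAt_id' (x := ((0:ℝ×ℝ)).2)))).add
      (pdy_hasDerivAt (q := (0:ℝ×ℝ)) (hr22.differentiableAt))
    rw [j22y] at H
    refine H.congr_deriv ?_
    ring
  -- smoothness of the partials of h
  have hf1C : ContDiff ℝ 3 (pdx h) := contDiff_pdx (n := 3) (hm.of_le (by norm_num))
  have hf2C : ContDiff ℝ 3 (pdy h) := contDiff_pdy (n := 3) (hm.of_le (by norm_num))
  have hf11C : ContDiff ℝ 2 (pdx (pdx h)) := contDiff_pdx (n := 2) (hf1C.of_le (by norm_num))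
  have hf12C : ContDiff ℝ 2 (pdx (pdy h)) := contDiff_pdx (n := 2) (hf2C.of_le (by norm_num))
  have hf22C : ContDiff ℝ 2 (pdy (pdy h)) := contDiff_pdy (n := 2) (hf2C.of_le (by norm_num))
  have hKC : ContDiff ℝ 2 (gaussK h) := by
    have hnum : ContDiff ℝ 2 (fun q => pdx (pdx h) q * pdy (pdy h) q - pdx (pdy h) q ^ 2) := by
      fun_prop
    have hden : ContDiff ℝ 2 (fun q : ℝ × ℝ => (1 + pdx h q ^ 2 + pdy h q ^ 2) ^ 2) := by
      have h1 : ContDiff ℝ 2 (pdx h) := hf1C.of_le (by norm_num)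
      have h2 : ContDiff ℝ 2 (pdy h) := hf2C.of_le (by norm_num)
      fun_prop
    exact hnum.div hden (fun q => by positivity)
  have hKd : DifferentiableAt ℝ (gaussK h) (0 : ℝ × ℝ) :=
    (hKC.differentiable (by norm_num)).differentiableAt
  refine ⟨?_, ?_, ?_⟩
  · show (pdx (pdx h) ((0:ℝ),(0:ℝ)) * pdy (pdy h) ((0:ℝ),(0:ℝ)) - pdx (pdy h) ((0:ℝ),(0:ℝ)) ^ 2)
      / (1 + pdx h ((0:ℝ),(0:ℝ)) ^ 2 + pdy h ((0:ℝ),(0:ℝ)) ^ 2) ^ 2 = 0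
    rw [v11, v22, v12, v1, v2]
    norm_num
  · refine pdx_eq (q := ((0:ℝ),(0:ℝ))) hKd ?_
    have A11 := pdx_hasDerivAt (q := (0:ℝ×ℝ)) (hf11C.differentiable (by norm_num)).differentiableAt
    have A12 := pdx_hasDerivAt (q := (0:ℝ×ℝ)) (hf12C.differentiable (by norm_num)).differentiableAt
    have A22 := pdx_hasDerivAt (q := (0:ℝ×ℝ)) (hf22C.differentiable (by norm_num)).differentiableAt
    have A1 := pdx_hasDerivAt (q := (0:ℝ×ℝ)) (hf1C.differentiable (by norm_num)).differentiableAt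
    have A2 := pdx_hasDerivAt (q := (0:ℝ×ℝ)) (hf2C.differentiable (by norm_num)).differentiableAt
    rw [d11x] at A11
    rw [d12x] at A12
    rw [d22x] at A22
    rw [w11] at A1
    rw [w12] at A2
    have Hnum := (A11.mul A22).sub (A12.pow 2)
    have Hden := (((hasDerivAt_const ((0:ℝ×ℝ)).1 (1:ℝ)).add (A1.pow 2)).add (A2.pow 2)).pow 2
    have HK := Hnum.div Hden (by simp [w1, w2, Prod.mk_zero_zero])
    refine HK.congr_deriv ?_
    simp only [w1, w2, w11, w12, w22, Prod.fst_zero, Prod.snd_zero, Prod.mk_zero_zero]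
    norm_num [v1, v2, v11, v12, v22]
    ring
  · refine pdy_eq (q := ((0:ℝ),(0:ℝ))) hKd ?_
    have A11 := pdy_hasDerivAt (q := (0:ℝ×ℝ)) (hf11C.differentiable (by norm_num)).differentiableAt
    have A12 := pdy_hasDerivAt (q := (0:ℝ×ℝ)) (hf12C.differentiable (by norm_num)).differentiableAt
    have A22 := pdy_hasDerivAt (q := (0:ℝ×ℝ)) (hf22C.differentiable (by norm_num)).differentiableAt
    have A1 := pdy_hasDerivAt (q := (0:ℝ×ℝ)) (hf1C.differentiable (by norm_num)).differentiableAt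
    have A2 := pdy_hasDerivAt (q := (0:ℝ×ℝ)) (hf2C.differentiable (by norm_num)).differentiableAt
    rw [d11y] at A11
    rw [d12y] at A12
    rw [d22y] at A22
    rw [w21] at A1
    rw [w22] at A2
    have Hnum := (A11.mul A22).sub (A12.pow 2)
    have Hden := (((hasDerivAt_const ((0:ℝ×ℝ)).2 (1:ℝ)).add (A1.pow 2)).add (A2.pow 2)).pow 2
    have HK := Hnum.div Hden (by simp [w1, w2, Prod.mk_zero_zero])
    refine HK.congr_deriv ?_
    simp only [w1, w2, w11, w12, w22, Prod.fst_zero, Prod.snd_zero, Prod.mk_zero_zero]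
    norm_num [v1, v2, v11, v12, v22]
    ring



open Topology in
/-- In the parabolic Monge chart with `k > 0`, `a ≠ 0`, the gradient of `K`
at the origin is the nonzero vector `k(a,d)`, and the zero set of `K` is
locally a regular curve `x = -(d/a) y + O(y²)`, transversal to `(1,0)`. -/
theorem statement13 (k a b c d : ℝ) (hk : 0 < k) (ha : a ≠ 0)
    (Rm : ℝ × ℝ → ℝ) (hR : ContDiff ℝ 4 Rm)
    (hjet : ∀ i : ℕ, i ≤ 3 → iteratedFDeriv ℝ i Rm 0 = 0) :
    pdx (gaussK (mongePar3 k a b c d Rm)) (0, 0) = k * a ∧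
    pdy (gaussK (mongePar3 k a b c d Rm)) (0, 0) = k * d ∧
    (k * a, k * d) ≠ ((0 : ℝ), (0 : ℝ)) ∧
    ∃ ε > 0, ∃ φ : ℝ → ℝ, ContDiff ℝ 1 φ ∧ φ 0 = 0 ∧ deriv φ 0 = -(d / a) ∧
      ∀ x y : ℝ, x ^ 2 + y ^ 2 < ε →
        (gaussK (mongePar3 k a b c d Rm) (x, y) = 0 ↔ x = φ y) := by
  obtain ⟨hK0, hKx, hKy⟩ := gradK_monge k a b c d Rm hR hjet
  set h := mongePar3 k a b c d Rm with hh
  set K := gaussK h with hKdef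
  have hka : k * a ≠ 0 := mul_ne_zero (ne_of_gt hk) ha
  refine ⟨hKx, hKy, by simp [Prod.ext_iff, hka], ?_⟩
  -- smoothness of K
  have hm : ContDiff ℝ 4 h := by rw [hh]; unfold mongePar3; fun_prop
  have hf1C : ContDiff ℝ 3 (pdx h) := contDiff_pdx (n := 3) (hm.of_le (by norm_num))
  have hf2C : ContDiff ℝ 3 (pdy h) := contDiff_pdy (n := 3) (hm.of_le (by norm_num))
  have hf11C : ContDiff ℝ 2 (pdx (pdx h)) := contDiff_pdx (n := 2) (hf1C.of_le (by norm_num))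
  have hf12C : ContDiff ℝ 2 (pdx (pdy h)) := contDiff_pdx (n := 2) (hf2C.of_le (by norm_num))
  have hf22C : ContDiff ℝ 2 (pdy (pdy h)) := contDiff_pdy (n := 2) (hf2C.of_le (by norm_num))
  have hKC : ContDiff ℝ 1 K := by
    have hnum : ContDiff ℝ 1 (fun q => pdx (pdx h) q * pdy (pdy h) q - pdx (pdy h) q ^ 2) := by
      have e1 : ContDiff ℝ 1 (pdx (pdx h)) := hf11C.of_le (by norm_num)
      have e2 : ContDiff ℝ 1 (pdx (pdy h)) := hf12C.of_le (by norm_num)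
      have e3 : ContDiff ℝ 1 (pdy (pdy h)) := hf22C.of_le (by norm_num)
      fun_prop
    have hden : ContDiff ℝ 1 (fun q : ℝ × ℝ => (1 + pdx h q ^ 2 + pdy h q ^ 2) ^ 2) := by
      have h1 : ContDiff ℝ 1 (pdx h) := hf1C.of_le (by norm_num)
      have h2 : ContDiff ℝ 1 (pdy h) := hf2C.of_le (by norm_num)
      fun_prop
    exact hnum.div hden (fun q => by positivity)
  have hKd : DifferentiableAt ℝ K ((0:ℝ), (0:ℝ)) :=
    (hKC.differentiable (by norm_num)).differentiableAt
  -- the gradient of K at the origin as a continuous linear map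
  have hgrad : ∀ v : ℝ × ℝ, fderiv ℝ K ((0:ℝ), (0:ℝ)) v = k * a * v.1 + k * d * v.2 := by
    intro v
    have hv : v = v.1 • ((1:ℝ), (0:ℝ)) + v.2 • ((0:ℝ), (1:ℝ)) := by
      ext <;> simp
    conv_lhs => rw [hv]
    rw [map_add, map_smul, map_smul]
    have e1 : fderiv ℝ K ((0:ℝ), (0:ℝ)) ((1:ℝ), (0:ℝ)) = k * a := hKx
    have e2 : fderiv ℝ K ((0:ℝ), (0:ℝ)) ((0:ℝ), (1:ℝ)) = k * d := hKy
    rw [e1, e2, smul_eq_mul, smul_eq_mul]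
    ring
  -- the continuous linear equivalence
  set Lf : ℝ × ℝ →L[ℝ] ℝ × ℝ :=
    ((k * a) • (ContinuousLinearMap.fst ℝ ℝ ℝ)
      + (k * d) • (ContinuousLinearMap.snd ℝ ℝ ℝ)).prod (ContinuousLinearMap.snd ℝ ℝ ℝ)
    with hLf
  set Lg : ℝ × ℝ →L[ℝ] ℝ × ℝ :=
    ((k * a)⁻¹ • (ContinuousLinearMap.fst ℝ ℝ ℝ)
      + (-(k * d) / (k * a)) • (ContinuousLinearMap.snd ℝ ℝ ℝ)).prod
      (ContinuousLinearMap.snd ℝ ℝ ℝ) with hLg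
  have hleft : Function.LeftInverse Lg Lf := by
    intro p
    have : Lg (Lf p) = p := by
      rw [hLf, hLg]
      ext
      · simp [ContinuousLinearMap.prod_apply]
        field_simp
        ring
      · simp [ContinuousLinearMap.prod_apply]
    exact this
  have hright : Function.RightInverse Lg Lf := by
    intro p
    have : Lf (Lg p) = p := by
      rw [hLf, hLg]
      ext
      · simp [ContinuousLinearMap.prod_apply]
        field_simp
        ring
      · simp [ContinuousLinearMap.prod_apply]
    exact this
  set A : (ℝ × ℝ) ≃L[ℝ] (ℝ × ℝ) := ContinuousLinearEquiv.equivOfInverse Lf Lg hleft hright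
    with hA
  -- the map ψ
  set ψ : ℝ × ℝ → ℝ × ℝ := fun q => (K q, q.2) with hψ
  have hψC : ContDiffAt ℝ 1 ψ ((0:ℝ), (0:ℝ)) := (hKC.prodMk contDiff_snd).contDiffAt
  have hKfd : HasFDerivAt K
      ((k * a) • (ContinuousLinearMap.fst ℝ ℝ ℝ)
        + (k * d) • (ContinuousLinearMap.snd ℝ ℝ ℝ)) ((0:ℝ), (0:ℝ)) := by
    have heq : ((k * a) • (ContinuousLinearMap.fst ℝ ℝ ℝ)
        + (k * d) • (ContinuousLinearMap.snd ℝ ℝ ℝ)) = fderiv ℝ K ((0:ℝ), (0:ℝ)) := by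
      refine ContinuousLinearMap.ext fun v => ?_
      rw [hgrad v]
      simp
    rw [heq]
    exact hKd.hasFDerivAt
  have hψd : HasFDerivAt ψ (A : (ℝ × ℝ) →L[ℝ] (ℝ × ℝ)) ((0:ℝ), (0:ℝ)) := by
    have : HasFDerivAt ψ Lf ((0:ℝ), (0:ℝ)) := hKfd.prodMk hasFDerivAt_snd
    exact this
  -- local homeomorphism from the inverse function theorem
  set PH := hψC.toOpenPartialHomeomorph ψ hψd (by norm_num) with hPH
  have hPHcoe : ⇑PH = ψ := hψC.toOpenPartialHomeomorph_coe hψd (by norm_num)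
  have hsrc : ((0:ℝ), (0:ℝ)) ∈ PH.source := hψC.mem_toOpenPartialHomeomorph_source hψd (by norm_num)
  have hψ0 : ψ ((0:ℝ), (0:ℝ)) = ((0:ℝ), (0:ℝ)) := by
    rw [hψ]
    simp only []
    rw [hK0]
  have htgt : ((0:ℝ), (0:ℝ)) ∈ PH.target := by
    have := hψC.image_mem_toOpenPartialHomeomorph_target hψd (by norm_num)
    rwa [hψ0] at this
  -- the implicit function
  set φ₀ : ℝ → ℝ := fun y => (PH.symm ((0:ℝ), y)).1 with hφ₀
  have hinvC : ContDiffAt ℝ 1 (⇑PH.symm) ((0:ℝ), (0:ℝ)) := by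
    have := hψC.to_localInverse hψd (by norm_num)
    rw [hψ0] at this
    exact this
  have hstrictinv : HasStrictFDerivAt (⇑PH.symm)
      ((A.symm : (ℝ × ℝ) →L[ℝ] (ℝ × ℝ))) ((0:ℝ), (0:ℝ)) := by
    have := (hψC.hasStrictFDerivAt' hψd (by norm_num)).to_localInverse
    rw [hψ0] at this
    exact this
  have hφ₀C : ContDiffAt ℝ 1 φ₀ 0 := by
    have h1 : ContDiffAt ℝ 1 (fun y : ℝ => ((0:ℝ), y)) 0 :=
      (contDiff_const.prodMk contDiff_id).contDiffAt
    have h2 : ContDiffAt ℝ 1 (fun y : ℝ => PH.symm ((0:ℝ), y)) 0 := hinvC.comp 0 h1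
    exact (contDiff_fst.contDiffAt.comp 0 h2 : _)
  have hφ₀d : HasDerivAt φ₀ (-(d / a)) 0 := by
    have hι : HasDerivAt (fun y : ℝ => ((0:ℝ), y)) ((0:ℝ), (1:ℝ)) 0 :=
      (hasDerivAt_const (0:ℝ) (0:ℝ)).prodMk (hasDerivAt_id 0)
    have Hc := hstrictinv.hasFDerivAt.comp_hasDerivAt 0 hι
    have Hf := (ContinuousLinearMap.fst ℝ ℝ ℝ).hasFDerivAt.comp_hasDerivAt 0 Hc
    have hval : ((ContinuousLinearMap.fst ℝ ℝ ℝ)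
        ((A.symm : (ℝ × ℝ) →L[ℝ] (ℝ × ℝ)) ((0:ℝ), (1:ℝ)))) = -(d / a) := by
      have : (A.symm : (ℝ × ℝ) →L[ℝ] (ℝ × ℝ)) = Lg := rfl
      rw [this, hLg]
      simp [ContinuousLinearMap.prod_apply]
      field_simp
    rw [hval] at Hf
    exact Hf
  have hφ₀0 : φ₀ 0 = 0 := by
    have h1 : PH.symm (PH ((0:ℝ), (0:ℝ))) = ((0:ℝ), (0:ℝ)) := PH.left_inv hsrc
    rw [hPHcoe, hψ0] at h1
    rw [hφ₀]
    simp only []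
    rw [h1]
  -- C¹ neighborhood for φ₀
  obtain ⟨u, hu_nhds, huC⟩ := hφ₀C.contDiffOn le_rfl (by simp)
  set U := interior u with hU
  have hUopen : IsOpen U := isOpen_interior
  have hU0 : (0:ℝ) ∈ U := mem_interior_iff_mem_nhds.2 hu_nhds
  have hUC : ContDiffOn ℝ 1 φ₀ U := huC.mono interior_subset
  obtain ⟨rr, hrr, hrball⟩ := Metric.isOpen_iff.1 hUopen 0 hU0
  have hcball : Metric.closedBall (0:ℝ) (rr/2) ⊆ U :=
    (Metric.closedBall_subset_ball (by linarith)).trans hrball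
  set χ : ContDiffBump (0:ℝ) := ⟨rr/4, rr/2, by positivity, by linarith⟩ with hχ
  set φ : ℝ → ℝ := fun y => χ y * φ₀ y with hφ
  have hφeq : ∀ y : ℝ, |y| ≤ rr/4 → φ y = φ₀ y := by
    intro y hy
    have : χ y = 1 := χ.one_of_mem_closedBall (by
      simpa [Metric.mem_closedBall, Real.dist_eq] using hy)
    rw [hφ]
    simp only []
    rw [this, one_mul]
  have hφC : ContDiff ℝ 1 φ := by
    rw [contDiff_iff_contDiffAt]
    intro y
    by_cases hy : y ∈ U
    · exact (χ.contDiff (n := 1)).contDiffAt.mul (hUC.contDiffAt (hUopen.mem_nhds hy))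
    · have hy' : y ∉ Metric.closedBall (0:ℝ) (rr/2) := fun hmem => hy (hcball hmem)
      have hev : ∀ᶠ z in 𝓝 y, φ z = 0 := by
        have hopen : IsOpen (Metric.closedBall (0:ℝ) (rr/2))ᶜ :=
          Metric.isClosed_closedBall.isOpen_compl
        filter_upwards [hopen.mem_nhds hy'] with z hz
        have hzsupp : z ∉ Function.support χ := by
          rw [χ.support_eq]
          intro hzb
          exact hz (Metric.ball_subset_closedBall hzb)
        have : χ z = 0 := Function.notMem_support.1 hzsupp
        rw [hφ]
        simp only []
        rw [this, zero_mul]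
      exact (contDiffAt_const (c := (0:ℝ))).congr_of_eventuallyEq hev
  have hφ0 : φ 0 = 0 := by
    rw [hφeq 0 (by simp; positivity), hφ₀0]
  have hφd : deriv φ 0 = -(d / a) := by
    have hev : φ =ᶠ[𝓝 0] φ₀ := by
      have : Metric.ball (0:ℝ) (rr/4) ∈ 𝓝 (0:ℝ) := Metric.ball_mem_nhds 0 (by positivity)
      filter_upwards [this] with z hz
      exact hφeq z (le_of_lt (by simpa [Real.dist_eq] using hz))
    rw [hev.deriv_eq, hφ₀d.deriv]
  -- choose ε
  obtain ⟨δ1, hδ1, hδ1b⟩ := Metric.isOpen_iff.1 PH.open_source _ hsrc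
  obtain ⟨δ2, hδ2, hδ2b⟩ := Metric.isOpen_iff.1 PH.open_target _ htgt
  set δ : ℝ := min (min δ1 δ2) (rr/4) with hδdef
  have hδ : 0 < δ := by
    rw [hδdef]
    refine lt_min (lt_min hδ1 hδ2) (by positivity)
  refine ⟨δ^2, by positivity, φ, hφC, hφ0, hφd, ?_⟩
  intro x y hxy
  have hx : |x| < δ := by
    refine lt_of_pow_lt_pow_left₀ 2 hδ.le ?_
    rw [sq_abs]; nlinarith [sq_nonneg y]
  have hy : |y| < δ := by
    refine lt_of_pow_lt_pow_left₀ 2 hδ.le ?_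
    rw [sq_abs]; nlinarith [sq_nonneg x]
  have hδδ1 : δ ≤ δ1 := le_trans (min_le_left _ _) (min_le_left _ _)
  have hδδ2 : δ ≤ δ2 := le_trans (min_le_left _ _) (min_le_right _ _)
  have hδrr : δ ≤ rr/4 := min_le_right _ _
  have hmem_src : ((x:ℝ), y) ∈ PH.source := by
    apply hδ1b
    rw [Metric.mem_ball, Prod.dist_eq]
    simp only [Real.dist_eq, sub_zero]
    exact max_lt (lt_of_lt_of_le hx hδδ1) (lt_of_lt_of_le hy hδδ1)
  have hmem_tgt : (((0:ℝ), y) : ℝ × ℝ) ∈ PH.target := by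
    apply hδ2b
    rw [Metric.mem_ball, Prod.dist_eq]
    simp only [Real.dist_eq, sub_zero, abs_zero]
    exact max_lt hδ2 (lt_of_lt_of_le hy hδδ2)
  have hφy : φ y = φ₀ y := hφeq y (le_of_lt (lt_of_lt_of_le hy hδrr))
  constructor
  · intro hKxy
    have hψxy : PH ((x:ℝ), y) = ((0:ℝ), y) := by
      rw [hPHcoe, hψ]
      simp only []
      rw [hKxy]
    have h1 : PH.symm (PH ((x:ℝ), y)) = ((x:ℝ), y) := PH.left_inv hmem_src
    rw [hψxy] at h1
    rw [hφy, hφ₀]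
    simp only []
    rw [h1]
  · intro hxφ
    have h1 : PH (PH.symm (((0:ℝ), y) : ℝ × ℝ)) = ((0:ℝ), y) := PH.right_inv hmem_tgt
    rw [hPHcoe] at h1
    have h2 : (PH.symm (((0:ℝ), y) : ℝ × ℝ)).2 = y := by
      have := congrArg Prod.snd h1
      simpa [hψ] using this
    have h3 : K (PH.symm (((0:ℝ), y) : ℝ × ℝ)) = 0 := by
      have := congrArg Prod.fst h1
      simpa [hψ] using this
    have h4 : PH.symm (((0:ℝ), y) : ℝ × ℝ) = (φ₀ y, y) := by
      refine Prod.ext ?_ ?_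
      · rfl
      · exact h2
    rw [hxφ, hφy, ← h4]
    exact h3
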